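/- Let K be a field and G a group acting faithfully on K by field automorphisms. For a finite subset B ⊆ K write G_{(B)} = {g ∈ G | g•b = b for all b ∈ B}. Assume G is precompact: every subgroup of G containing G_{(B)} for some finite B ⊆ K has finite index in G. Let V be a smooth K-semilinear representation of G, i.e. a K-vector space with an additive G-action satisfying g•(c•v) = (g•c)•(g•v), such that every v ∈ V is fixed by G_{(B)} for some finite B ⊆ K. Then the natural K-linear map K ⊗_{K^G} V^G → V, c ⊗ v ↦ c•v, is bijective; equivalently, V is a direct sum of copies of K. -/

import Mathlib

set_option synthInstance.maxHeartbeats 1000000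
set_option maxHeartbeats 1000000

/-- The automorphism group structure on `V ≃+ V` (composition), as `AddAut` had it in older Mathlib. -/
instance addEquivSelfGroup (V : Type) [Add V] : Group (V ≃+ V) where
  mul f g := g.trans f
  one := AddEquiv.refl V
  inv := AddEquiv.symm
  mul_assoc _ _ _ := rfl
  one_mul _ := rfl
  mul_one _ := rfl
  inv_mul_cancel e := AddEquiv.ext (fun x => e.symm_apply_apply x)

/-- The fixed subfield `K^G` of an action of `G` on a field `K` by field
automorphisms. -/
def fixedSubfield (K : Type) [Field K] (G : Type) [Group G]
    (act : G →* (K ≃+* K)) : Subfield K where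
  carrier := {c | ∀ g, act g c = c}
  mul_mem' := fun {a b} ha hb g => by rw [map_mul, ha g, hb g]
  one_mem' := fun g => map_one _
  add_mem' := fun {a b} ha hb g => by rw [map_add, ha g, hb g]
  zero_mem' := fun g => map_zero _
  neg_mem' := fun {a} ha g => by rw [map_neg, ha g]
  inv_mem' := fun a ha g => by rw [map_inv₀, ha g]

/-- The fixed vectors `V^G` of a `K`-semilinear representation `(V, ρ)` of `G`,
as a `K^G`-submodule of `V`. -/
def fixedSubmodule (K : Type) [Field K] (G : Type) [Group G] (act : G →* (K ≃+* K))
    (V : Type) [AddCommGroup V] [Module K V] (ρ : G →* (V ≃+ V))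
    (hsemi : ∀ (g : G) (c : K) (v : V), ρ g (c • v) = act g c • ρ g v) :
    Submodule (fixedSubfield K G act) V where
  carrier := {v | ∀ g, ρ g v = v}
  add_mem' := fun {a b} ha hb g => by rw [map_add, ha g, hb g]
  zero_mem' := fun g => map_zero _
  smul_mem' := fun c v hv g => by
    have : (c • v : V) = (↑c : K) • v := rfl
    rw [this, hsemi g ↑c v, c.2 g, hv g]

/-- The natural `K^G`-linear map `K ⊗_{K^G} V^G → V`, `c ⊗ v ↦ c • v`. -/
noncomputable def natTensorMap (K : Type) [Field K] (G : Type) [Group G]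
    (act : G →* (K ≃+* K))
    (V : Type) [AddCommGroup V] [Module K V] (ρ : G →* (V ≃+ V))
    (hsemi : ∀ (g : G) (c : K) (v : V), ρ g (c • v) = act g c • ρ g v) :
    TensorProduct (fixedSubfield K G act) K (fixedSubmodule K G act V ρ hsemi)
      →ₗ[fixedSubfield K G act] V :=
  TensorProduct.lift (LinearMap.mk₂ (fixedSubfield K G act)
    (fun (c : K) (v : fixedSubmodule K G act V ρ hsemi) => c • (v : V))
    (fun m₁ m₂ v => add_smul m₁ m₂ (v : V))
    (fun a m v => by
      show ((a • m) : K) • (v : V) = a • (m • (v : V))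
      have h1 : (a • m : K) = (↑a : K) * m := rfl
      have h2 : a • (m • (v : V)) = (↑a : K) • (m • (v : V)) := rfl
      rw [h1, h2, mul_smul])
    (fun m v₁ v₂ => by
      show m • ((v₁ + v₂ : _) : V) = m • (v₁ : V) + m • (v₂ : V)
      rw [Submodule.coe_add, smul_add])
    (fun a m v => by
      show m • ((a • v : _) : V) = a • (m • (v : V))
      have h1 : ((a • v : _) : V) = (↑a : K) • (v : V) := rfl
      have h2 : a • (m • (v : V)) = (↑a : K) • (m • (v : V)) := rfl
      rw [h1, h2, smul_comm]))

/-- Auxiliary: a family of `G`-fixed vectors that is linearly independent over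
the fixed field stays linearly independent over `K`. -/
theorem aux_indep (K : Type) [Field K] (G : Type) [Group G] (act : G →* (K ≃+* K))
    (V : Type) [AddCommGroup V] [Module K V] (ρ : G →* (V ≃+ V))
    (hsemi : ∀ (g : G) (c : K) (v : V), ρ g (c • v) = act g c • ρ g v)
    {ι : Type} (w : ι → V) (hfix : ∀ i g, ρ g (w i) = w i)
    (hk : ∀ (s : Finset ι) (c : ι → fixedSubfield K G act),
      (∑ i ∈ s, (c i : K) • w i) = 0 → ∀ i ∈ s, c i = 0) :
    ∀ (s : Finset ι) (c : ι → K), (∑ i ∈ s, c i • w i) = 0 → ∀ i ∈ s, c i = 0 := by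
  classical
  intro s
  induction s using Finset.strongInduction with
  | _ s IH =>
    intro c hc i₀ hi₀
    by_contra hne
    by_cases hz : ∃ j ∈ s, c j = 0
    · obtain ⟨j, hj, hcj⟩ := hz
      have hij : i₀ ≠ j := fun h => hne (h ▸ hcj)
      refine hne (IH (s.erase j) (Finset.erase_ssubset hj) c ?_ i₀
        (Finset.mem_erase.2 ⟨hij, hi₀⟩))
      rw [Finset.sum_erase s (by rw [hcj, zero_smul])]
      exact hc
    · push_neg at hz
      set d : ι → K := fun i => (c i₀)⁻¹ * c i with hd
      have hdi₀ : d i₀ = 1 := inv_mul_cancel₀ hne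
      have hd0 : ∑ i ∈ s, d i • w i = 0 := by
        have : ∑ i ∈ s, d i • w i = (c i₀)⁻¹ • ∑ i ∈ s, c i • w i := by
          rw [Finset.smul_sum]
          exact Finset.sum_congr rfl fun i _ => by rw [smul_smul]
        rw [this, hc, smul_zero]
      have hkey : ∀ g : G, ∀ i ∈ s, act g (d i) = d i := by
        intro g
        have h1 : ∑ i ∈ s, (act g (d i)) • w i = 0 := by
          have h2 := congrArg (ρ g) hd0
          rw [map_sum, map_zero] at h2
          rw [← h2]
          exact Finset.sum_congr rfl fun i _ => by rw [hsemi, hfix]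
        have h3 : ∑ i ∈ s, (act g (d i) - d i) • w i = 0 := by
          have : ∀ i ∈ s, (act g (d i) - d i) • w i
              = (act g (d i)) • w i - d i • w i :=
            fun i _ => sub_smul _ _ _
          rw [Finset.sum_congr rfl this, Finset.sum_sub_distrib, h1, hd0, sub_zero]
        have h4 : ∑ i ∈ s.erase i₀, (act g (d i) - d i) • w i = 0 := by
          rw [Finset.sum_erase s (by rw [hdi₀, map_one, sub_self, zero_smul])]
          exact h3
        intro i hi
        by_cases hii : i = i₀
        · rw [hii, hdi₀, map_one]
        · have := IH (s.erase i₀) (Finset.erase_ssubset hi₀)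
            (fun i => act g (d i) - d i) h4 i (Finset.mem_erase.2 ⟨hii, hi⟩)
          exact sub_eq_zero.mp this
      set c' : ι → fixedSubfield K G act := fun i =>
        if h : ∀ g, act g (d i) = d i then ⟨d i, h⟩ else 0 with hc'
      have hrel : ∑ i ∈ s, (c' i : K) • w i = 0 := by
        rw [← hd0]
        refine Finset.sum_congr rfl fun i hi => ?_
        have h : ∀ g, act g (d i) = d i := fun g => hkey g i hi
        simp only [hc', dif_pos h]
      have := hk s c' hrel i₀ hi₀
      have h1 : (c' i₀ : K) = d i₀ := by
        have h : ∀ g, act g (d i₀) = d i₀ := fun g => hkey g i₀ hi₀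
        simp only [hc', dif_pos h]
      rw [this, hdi₀] at h1
      exact one_ne_zero (α := K) h1.symm

/-- **An analogue of Hilbert's Theorem 90 for precompact groups.**  Let `G` be
a group acting faithfully on a field `K` by field automorphisms (via `act`).
For a finite `B ⊆ K`, `G_{(B)}` denotes the pointwise stabilizer
`{g | ∀ b ∈ B, act g b = b}`.  Assume `G` is precompact: every subgroup of `G`
containing some `G_{(B)}` has finite index (`index ≠ 0`).  Let `(V, ρ)` be a
smooth `K`-semilinear representation of `G`: semilinear via `hsemi`, and every
vector fixed by some `G_{(B)}` (`hsmooth`).  Then the natural map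
`K ⊗_{K^G} V^G → V`, `c ⊗ v ↦ c • v`, is bijective; equivalently `V` is a
direct sum of copies of `K`. -/
theorem hilbert90_precompact
    (K : Type) [Field K] (G : Type) [Group G]
    (act : G →* (K ≃+* K))
    (hfaithful : ∀ g : G, (∀ c : K, act g c = c) → g = 1)
    (hprecompact : ∀ H : Subgroup G, (∃ B : Finset K,
      ∀ g : G, (∀ b ∈ B, act g b = b) → g ∈ H) → H.index ≠ 0)
    (V : Type) [AddCommGroup V] [Module K V]
    (ρ : G →* (V ≃+ V))
    (hsemi : ∀ (g : G) (c : K) (v : V), ρ g (c • v) = act g c • ρ g v)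
    (hsmooth : ∀ v : V, ∃ B : Finset K,
      ∀ g : G, (∀ b ∈ B, act g b = b) → ρ g v = v) :
    Function.Bijective (natTensorMap K G act V ρ hsemi) := by
  classical
  set k := fixedSubfield K G act with hkdef
  set M := fixedSubmodule K G act V ρ hsemi with hMdef
  set F := natTensorMap K G act V ρ hsemi with hFdef
  have hFtmul : ∀ (c : K) (m : M), F (c ⊗ₜ[k] m) = c • (m : V) := fun c m => rfl
  constructor
  · -- injectivity
    have hzero : ∀ x, F x = 0 → x = 0 := by
      intro x hx
      set b : Module.Basis (Module.Basis.ofVectorSpaceIndex k M) k M := Module.Basis.ofVectorSpace k M with hb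
      set B' : Module.Basis (Module.Basis.ofVectorSpaceIndex k M) K (TensorProduct k K M) :=
        b.baseChange K with hB'
      have hw : ∀ i (g : G), ρ g ((b i : M) : V) = ((b i : M) : V) := fun i g => (b i).2 g
      have hk' : ∀ (s : Finset (Module.Basis.ofVectorSpaceIndex k M)) (c : _ → k),
          (∑ i ∈ s, (c i : K) • ((b i : M) : V)) = 0 → ∀ i ∈ s, c i = 0 := by
        intro s c hs
        have hsum : ((∑ i ∈ s, c i • b i : M) : V) = ∑ i ∈ s, (c i : K) • ((b i : M) : V) := by
          rw [Submodule.coe_sum]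
          exact Finset.sum_congr rfl fun i _ => rfl
        rw [← hsum] at hs
        have h0 : (∑ i ∈ s, c i • b i : M) = 0 := by
          exact_mod_cast hs
        exact fun i hi => linearIndependent_iff'.mp b.linearIndependent s c h0 i hi
      set l := B'.repr x with hl
      have hxsum : x = ∑ i ∈ l.support, l i • B' i := by
        conv_lhs => rw [← B'.linearCombination_repr x]
        rw [Finsupp.linearCombination_apply, Finsupp.sum]
      have hterm : ∀ i, l i • B' i = (l i) ⊗ₜ[k] (b i : M) := by
        intro i
        rw [hB', Module.Basis.baseChange_apply, TensorProduct.smul_tmul', smul_eq_mul, mul_one]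
      have hFx : F x = ∑ i ∈ l.support, l i • ((b i : M) : V) := by
        conv_lhs => rw [hxsum]
        rw [map_sum]
        exact Finset.sum_congr rfl fun i _ => by rw [hterm, hFtmul]
      have h0 : ∑ i ∈ l.support, l i • ((b i : M) : V) = 0 := by rw [← hFx, hx]
      have hall := aux_indep K G act V ρ hsemi (fun i => ((b i : M) : V)) hw hk'
        l.support l h0
      have hl0 : l = 0 := Finsupp.ext fun i => by
        by_cases h : i ∈ l.support
        · exact hall i h
        · exact Finsupp.notMem_support_iff.mp h
      have : x = B'.repr.symm (B'.repr x) := (B'.repr.symm_apply_apply x).symm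
      rw [this, ← hl, hl0, map_zero]
    intro x y hxy
    have := hzero (x - y) (by rw [map_sub, hxy, sub_self])
    exact sub_eq_zero.mp this
  · -- surjectivity
    intro v
    obtain ⟨B, hB⟩ := hsmooth v
    set P : Subgroup G :=
      { carrier := {g | ∀ b ∈ B, act g b = b}
        one_mem' := fun b _ => by rw [map_one]; rfl
        mul_mem' := fun {g h} hg hh b hb => by
          rw [map_mul]
          show act g (act h b) = b
          rw [hh b hb, hg b hb]
        inv_mem' := fun {g} hg b hb => by
          have h1 : act g⁻¹ (act g b) = b := by
            rw [show act g⁻¹ (act g b) = (act g⁻¹ * act g) b from rfl, ← map_mul,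
              inv_mul_cancel, map_one]
            rfl
          rwa [hg b hb] at h1 } with hPdef
    haveI hPfin : P.FiniteIndex := ⟨hprecompact P ⟨B, fun g h => h⟩⟩
    haveI : Fintype (G ⧸ P) := Fintype.ofFinite _
    have hvP : ∀ g ∈ P, ρ g v = v := fun g hg => hB g hg
    set L : Subfield K :=
      { carrier := {c | ∀ g ∈ P, act g c = c}
        mul_mem' := fun {a b} ha hb g hg => by rw [map_mul]; show act g a * act g b = a * b; rw [ha g hg, hb g hg]
        one_mem' := fun g _ => map_one _
        add_mem' := fun {a b} ha hb g hg => by rw [map_add, ha g hg, hb g hg]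
        zero_mem' := fun g _ => map_zero _
        neg_mem' := fun {a} ha g hg => by rw [map_neg, ha g hg]
        inv_mem' := fun a ha g hg => by rw [map_inv₀, ha g hg] } with hLdef
    have hBL : ∀ b ∈ B, b ∈ L := fun b hb g hg => hg b hb
    have hcoset : ∀ (c : K), (∀ g ∈ P, act g c = c) → ∀ g₁ g₂ : G,
        (g₁ : G ⧸ P) = (g₂ : G ⧸ P) →
        (act g₁ c) • (ρ g₁ v) = (act g₂ c) • (ρ g₂ v) := by
      intro c hcL g₁ g₂ h12
      have hp : g₁⁻¹ * g₂ ∈ P := QuotientGroup.eq.mp h12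
      have hg2 : g₂ = g₁ * (g₁⁻¹ * g₂) := by group
      have e1 : act g₂ c = act g₁ c := by
        rw [hg2, map_mul]
        show act g₁ (act (g₁⁻¹ * g₂) c) = act g₁ c
        rw [hcL _ hp]
      have e2 : ρ g₂ v = ρ g₁ v := by
        rw [hg2, map_mul]
        show ρ g₁ (ρ (g₁⁻¹ * g₂) v) = ρ g₁ v
        rw [hvP _ hp]
      rw [e1, e2]
    set out : (G ⧸ P) → G := Quotient.out with houtdef
    have hout : ∀ q : G ⧸ P, ((out q : G) : G ⧸ P) = q := fun q => QuotientGroup.out_eq' q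
    set q₀ : G ⧸ P := ((1 : G) : G ⧸ P) with hq₀
    set T : L → V := fun c => ∑ q : G ⧸ P, (act (out q) (c : K)) • (ρ (out q) v) with hTdef
    have hTfix : ∀ (c : L) (g : G), ρ g (T c) = T c := by
      intro c g
      have step : ∀ q : G ⧸ P, ρ g ((act (out q) (c : K)) • (ρ (out q) v))
          = (act (out (g • q)) (c : K)) • (ρ (out (g • q)) v) := by
        intro q
        rw [hsemi]
        have h1 : act g (act (out q) (c : K)) = act (g * out q) (c : K) := by
          rw [map_mul]; rfl
        have h2 : ρ g (ρ (out q) v) = ρ (g * out q) v := by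
          rw [map_mul]; rfl
        rw [h1, h2]
        refine hcoset (c : K) c.2 (g * out q) (out (g • q)) ?_
        rw [hout]
        show (↑(g * out q) : G ⧸ P) = g • q
        have : (↑(g * out q) : G ⧸ P) = g • (↑(out q) : G ⧸ P) := rfl
        rw [this, hout]
      calc ρ g (T c) = ∑ q : G ⧸ P, ρ g ((act (out q) (c : K)) • (ρ (out q) v)) := by
            rw [hTdef, map_sum]
        _ = ∑ q : G ⧸ P, (act (out (g • q)) (c : K)) • (ρ (out (g • q)) v) :=
            Finset.sum_congr rfl fun q _ => step q
        _ = ∑ q : G ⧸ P, (act (out q) (c : K)) • (ρ (out q) v) :=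
            Function.Bijective.sum_comp (MulAction.bijective g)
              (fun q => (act (out q) (c : K)) • (ρ (out q) v))
        _ = T c := rfl
    have hTmem : ∀ c : L, T c ∈ M := fun c => hTfix c
    set A : L → ((G ⧸ P) → K) := fun c q => act (out q) (c : K) with hAdef
    set σ : (G ⧸ P) → (L →* K) := fun q =>
      { toFun := fun c => act (out q) (c : K)
        map_one' := by simp
        map_mul' := fun x y => by
          show act (out q) ((x * y : L) : K) = act (out q) (x : K) * act (out q) (y : K)
          push_cast
          rw [map_mul] } with hσdef
    have hσinj : Function.Injective σ := by
      intro q₁ q₂ h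
      have h' : ∀ c : L, act (out q₁) (c : K) = act (out q₂) (c : K) :=
        fun c => DFunLike.congr_fun h c
      rw [← hout q₁, ← hout q₂, QuotientGroup.eq]
      intro b hb
      have hbL : b ∈ L := hBL b hb
      have hbe := h' ⟨b, hbL⟩
      show act ((out q₁)⁻¹ * out q₂) b = b
      rw [map_mul]
      show act (out q₁)⁻¹ (act (out q₂) b) = b
      rw [← hbe]
      rw [show act (out q₁)⁻¹ (act (out q₁) b) = (act (out q₁)⁻¹ * act (out q₁)) b from rfl,
        ← map_mul, inv_mul_cancel, map_one]
      rfl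
    have hLI : LinearIndependent K (fun q : G ⧸ P => ((σ q : L →* K) : L → K)) :=
      (linearIndependent_monoidHom L K).comp σ hσinj
    set e : (G ⧸ P) → K := fun q => if q = q₀ then 1 else 0 with hedef
    have he : e ∈ Submodule.span K (Set.range A) := by
      by_contra hmem
      obtain ⟨f, hf0, hfmap⟩ := Submodule.exists_dual_map_eq_bot_of_notMem hmem inferInstance
      set a : (G ⧸ P) → K := fun q => f (fun j => if q = j then 1 else 0) with hadef
      have hker : ∀ c : L, f (A c) = 0 := by
        intro c
        have hmm : f (A c) ∈ Submodule.map f (Submodule.span K (Set.range A)) :=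
          Submodule.mem_map_of_mem (Submodule.subset_span (Set.mem_range_self c))
        rw [hfmap] at hmm
        exact (Submodule.mem_bot K).mp hmm
      have hsum : ∀ c : L, ∑ q : G ⧸ P, a q • (σ q c) = 0 := by
        intro c
        calc ∑ q : G ⧸ P, a q • (σ q c)
            = ∑ q : G ⧸ P, (A c q) • a q := Finset.sum_congr rfl fun q _ => by
              show a q * σ q c = A c q * a q
              rw [mul_comm]; rfl
          _ = f (A c) := (LinearMap.pi_apply_eq_sum_univ f (A c)).symm
          _ = 0 := hker c
      have ha0 : ∀ q, a q = 0 := by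
        refine Fintype.linearIndependent_iff.mp hLI a ?_
        funext c
        have h2 : (∑ q : G ⧸ P, a q • ((σ q : L →* K) : L → K)) c
            = ∑ q : G ⧸ P, a q • (σ q c) := by
          simp only [Finset.sum_apply, Pi.smul_apply]
        exact h2.trans (hsum c)
      have hfe : f e = a q₀ := by
        rw [LinearMap.pi_apply_eq_sum_univ f e]
        have : ∀ q : G ⧸ P, e q • a q = if q = q₀ then a q else 0 := by
          intro q
          rw [hedef]
          by_cases h : q = q₀ <;> simp [h]
        rw [Finset.sum_congr rfl fun q _ => this q, Finset.sum_ite_eq' Finset.univ _ a]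
        simp
      exact hf0 (by rw [hfe, ha0 q₀])
    obtain ⟨lc, hlc⟩ := Finsupp.mem_span_range_iff_exists_finsupp.mp he
    refine ⟨∑ c ∈ lc.support, (lc c) ⊗ₜ[k] (⟨T c, hTmem c⟩ : M), ?_⟩
    rw [map_sum]
    have hstep1 : ∀ c ∈ lc.support, F ((lc c) ⊗ₜ[k] (⟨T c, hTmem c⟩ : M)) = lc c • T c :=
      fun c _ => hFtmul _ _
    rw [Finset.sum_congr rfl hstep1]
    have hcoeff : ∀ q : G ⧸ P, (∑ c ∈ lc.support, lc c * A c q) = e q := by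
      intro q
      have h1 := congrFun hlc q
      rw [Finsupp.sum] at h1
      rw [Finset.sum_apply] at h1
      exact h1
    have expand1 : ∀ c ∈ lc.support, lc c • T c
        = ∑ q : G ⧸ P, (lc c * A c q) • (ρ (out q) v) := by
      intro c _
      rw [hTdef, Finset.smul_sum]
      exact Finset.sum_congr rfl fun q _ => by rw [smul_smul]
    have expand : ∑ c ∈ lc.support, lc c • T c
        = ∑ q : G ⧸ P, (∑ c ∈ lc.support, lc c * A c q) • (ρ (out q) v) := by
      rw [Finset.sum_congr rfl expand1, Finset.sum_comm]
      exact Finset.sum_congr rfl fun q _ => by rw [Finset.sum_smul]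
    rw [expand]
    have hfinal : ∑ q : G ⧸ P, (∑ c ∈ lc.support, lc c * A c q) • (ρ (out q) v)
        = ρ (out q₀) v := by
      rw [Finset.sum_congr rfl fun q _ => by rw [hcoeff q]]
      have : ∀ q : G ⧸ P, e q • ρ (out q) v
          = if q = q₀ then ρ (out q) v else 0 := by
        intro q
        rw [hedef]
        by_cases h : q = q₀ <;> simp [h]
      rw [Finset.sum_congr rfl fun q _ => this q,
        Finset.sum_ite_eq' Finset.univ q₀ (fun q => ρ (out q) v)]
      simp
    rw [hfinal]
    apply hvP
    have h1 : ((out q₀ : G) : G ⧸ P) = ((1 : G) : G ⧸ P) := hout q₀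
    have h2 : (1 : G)⁻¹ * out q₀ ∈ P := QuotientGroup.eq.mp h1.symm
    simpa using h2
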